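/- Let T be a finite tree, let f be a locating k-coloring of T, let x be a vertex of maximum degree in T, and let p be the number of distinct colors appearing on the neighbors of x. Then Δ(T) ≤ p·2^(p-1)·3^(k-1-p), where Δ(T) denotes the maximum degree of T. -/

import Mathlib

/-- A proper `k`-coloring of `G`: a function onto the `k` colors such that
adjacent vertices receive different colors. -/
def IsProperColoring {V : Type*} (G : SimpleGraph V) (k : ℕ) (f : V → Fin k) : Prop :=
  Function.Surjective f ∧ ∀ u v : V, G.Adj u v → f u ≠ f v

/-- The color code of a vertex `v`: its `i`-th coordinate is the distance from `v`
to the color class `f⁻¹(i)`. -/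
noncomputable def colorCode {V : Type*} (G : SimpleGraph V) {k : ℕ} (f : V → Fin k)
    (v : V) : Fin k → ℕ :=
  fun i => sInf {n : ℕ | ∃ u : V, f u = i ∧ G.dist v u = n}

/-- A locating `k`-coloring: a proper `k`-coloring in which distinct vertices have
distinct color codes. -/
def IsLocatingColoring {V : Type*} (G : SimpleGraph V) (k : ℕ) (f : V → Fin k) : Prop :=
  IsProperColoring G k f ∧ Function.Injective (colorCode G f)

/-- The locating chromatic number: the least `k` admitting a locating `k`-coloring. -/
noncomputable def locatingChromaticNumber {V : Type*} (G : SimpleGraph V) : ℕ :=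
  sInf {k : ℕ | ∃ f : V → Fin k, IsLocatingColoring G k f}

/-- In a finite tree with a locating `k`-coloring, if `x` is a vertex of maximum degree
and `p` is the number of distinct colors appearing on the neighbors of `x`, then
`Δ(T) ≤ p * 2^(p-1) * 3^(k-1-p)`. -/
theorem maxDegree_le_of_locatingColoring {V : Type*} [Fintype V] [DecidableEq V]
    (G : SimpleGraph V) [DecidableRel G.Adj] (hT : G.IsTree) (k : ℕ) (f : V → Fin k)
    (hf : IsLocatingColoring G k f) (x : V) (hx : G.degree x = G.maxDegree)
    (p : ℕ) (hp : p = ((G.neighborFinset x).image f).card) :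
    G.maxDegree ≤ p * 2 ^ (p - 1) * 3 ^ (k - 1 - p) := by
  classical
  obtain ⟨⟨hsurj, hprop⟩, hinj⟩ := hf
  have hconn : G.Connected := hT.isConnected
  set g := colorCode G f with hg
  -- basic facts about color codes
  have hne : ∀ (v : V) (i : Fin k),
      {n : ℕ | ∃ u : V, f u = i ∧ G.dist v u = n}.Nonempty := by
    intro v i
    obtain ⟨u, hu⟩ := hsurj i
    exact ⟨G.dist v u, u, hu, rfl⟩
  have hmem : ∀ (v : V) (i : Fin k), ∃ u : V, f u = i ∧ G.dist v u = g v i := by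
    intro v i; exact Nat.sInf_mem (hne v i)
  have hle : ∀ (v u : V), g v (f u) ≤ G.dist v u := by
    intro v u
    exact Nat.sInf_le ⟨u, rfl, rfl⟩
  have hself : ∀ v : V, g v (f v) = 0 := by
    intro v
    have := hle v v
    simpa [SimpleGraph.dist_self] using this
  have hpos : ∀ (v : V) (i : Fin k), f v ≠ i → 1 ≤ g v i := by
    intro v i h
    rcases Nat.eq_zero_or_pos (g v i) with h0 | h1
    · obtain ⟨u, hu, hd⟩ := hmem v i
      rw [h0] at hd
      have hvu : v = u := (hconn.dist_eq_zero_iff).mp hd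
      exact absurd (hvu ▸ hu) h
    · exact h1
  have hlip : ∀ (v w : V) (i : Fin k), g v i ≤ g w i + G.dist v w := by
    intro v w i
    obtain ⟨u, hu, hd⟩ := hmem w i
    calc g v i ≤ G.dist v u := hu ▸ hle v u
      _ ≤ G.dist v w + G.dist w u := hconn.dist_triangle
      _ = g w i + G.dist v w := by rw [hd]; ring
  -- notation
  set N := G.neighborFinset x with hN
  set C := N.image f with hC
  have hdist1 : ∀ u ∈ N, G.dist u x = 1 := by
    intro u hu
    rw [SimpleGraph.mem_neighborFinset] at hu
    exact SimpleGraph.dist_eq_one_iff_adj.mpr hu.symm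
  have hfx_notC : f x ∉ C := by
    intro h
    obtain ⟨u, hu, hfu⟩ := Finset.mem_image.mp h
    rw [SimpleGraph.mem_neighborFinset] at hu
    exact hprop x u hu hfu.symm
  -- per-color bound
  have hbound : ∀ c ∈ C,
      (N.filter (fun u => f u = c)).card ≤ 2 ^ (p - 1) * 3 ^ (k - 1 - p) := by
    intro c hcC
    set allowed : Fin k → Finset ℕ := fun i =>
      if i = c then {0}
      else if i ∈ C then {1, 2}
      else if i = f x then {1}
      else {g x i - 1, g x i, g x i + 1} with hallowed
    have hcard_le : (N.filter (fun u => f u = c)).card ≤ (Fintype.piFinset allowed).card := by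
      apply Finset.card_le_card_of_injOn g
      · intro u hu
        rw [Finset.mem_coe, Finset.mem_filter] at hu
        obtain ⟨huN, hfu⟩ := hu
        have hdu : G.dist u x = 1 := hdist1 u huN
        rw [Finset.mem_coe, Fintype.mem_piFinset]
        intro i
        by_cases hic : i = c
        · subst hic
          simp only [allowed, if_pos rfl, Finset.mem_singleton]
          rw [← hfu]; exact hself u
        · by_cases hiC : i ∈ C
          · simp only [allowed, if_neg hic, if_pos hiC]
            have h1 : 1 ≤ g u i := hpos u i (by rw [hfu]; exact fun h => hic h.symm)
            obtain ⟨w, hwN, hfw⟩ := Finset.mem_image.mp hiC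
            have h2 : g u i ≤ 2 := by
              calc g u i ≤ G.dist u w := hfw ▸ hle u w
                _ ≤ G.dist u x + G.dist x w := hconn.dist_triangle
                _ ≤ 2 := by
                    rw [hdu, SimpleGraph.dist_comm, hdist1 w hwN]
            simp only [Finset.mem_insert, Finset.mem_singleton]
            omega
          · by_cases hifx : i = f x
            · simp only [allowed, if_neg hic, if_neg hiC, if_pos hifx, Finset.mem_singleton]
              have h1 : 1 ≤ g u i := by
                apply hpos u i
                rw [hfu, hifx]
                intro h
                exact hfx_notC (h ▸ hcC)
              have h2 : g u i ≤ 1 := by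
                calc g u i ≤ G.dist u x := by rw [hifx]; exact hle u x
                  _ = 1 := hdu
              omega
            · simp only [allowed, if_neg hic, if_neg hiC, if_neg hifx,
                Finset.mem_insert, Finset.mem_singleton]
              have h1 : g u i ≤ g x i + 1 := by
                have := hlip u x i; rwa [hdu] at this
              have h2 : g x i ≤ g u i + 1 := by
                have := hlip x u i
                rwa [SimpleGraph.dist_comm, hdu] at this
              omega
      · intro a _ b _ hab
        exact hinj hab
    refine hcard_le.trans ?_
    rw [Fintype.card_piFinset]
    have hstep : ∏ i, (allowed i).card ≤ ∏ i, (if i = c then 1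
        else if i ∈ C then 2 else if i = f x then 1 else 3) := by
      apply Finset.prod_le_prod'
      intro i _
      by_cases hic : i = c
      · simp [allowed, hic]
      · by_cases hiC : i ∈ C
        · simp only [allowed, if_neg hic, if_pos hiC]
          rw [Finset.card_insert_of_notMem (by simp), Finset.card_singleton]
        · by_cases hifx : i = f x
          · subst hifx; simp [allowed, hic, hiC]
          · simp only [allowed, if_neg hic, if_neg hiC, if_neg hifx]
            refine (Finset.card_insert_le _ _).trans ?_
            exact Nat.succ_le_succ ((Finset.card_insert_le _ _).trans
              (by rw [Finset.card_singleton]))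
    refine hstep.trans ?_
    -- compute the product
    set b : Fin k → ℕ := fun i => if i = c then 1
        else if i ∈ C then 2 else if i = f x then 1 else 3 with hb
    have hsplit : ∏ i, b i = (∏ i ∈ insert (f x) C, b i) * ∏ i ∈ (insert (f x) C)ᶜ, b i :=
      (Finset.prod_mul_prod_compl (insert (f x) C) b).symm
    have hfxc : f x ≠ c := fun h => hfx_notC (h ▸ hcC)
    have h1 : ∏ i ∈ insert (f x) C, b i = 2 ^ (p - 1) := by
      rw [Finset.prod_insert hfx_notC]
      have hbfx : b (f x) = 1 := by simp [hb, hfxc, hfx_notC]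
      rw [hbfx, one_mul]
      rw [← Finset.mul_prod_erase C b hcC]
      have hbc : b c = 1 := by simp [hb]
      rw [hbc, one_mul]
      rw [Finset.prod_congr rfl (fun i hi => ?_), Finset.prod_const]
      · rw [Finset.card_erase_of_mem hcC, ← hp]
      · rw [Finset.mem_erase] at hi
        simp [hb, hi.1, hi.2]
    have h2 : ∏ i ∈ (insert (f x) C)ᶜ, b i = 3 ^ (k - 1 - p) := by
      rw [Finset.prod_congr rfl (fun i hi => ?_), Finset.prod_const]
      · congr 1
        rw [Finset.card_compl, Finset.card_insert_of_notMem hfx_notC, ← hp,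
          Fintype.card_fin]
        omega
      · rw [Finset.mem_compl, Finset.mem_insert] at hi
        push_neg at hi
        have hic : i ≠ c := fun h => hi.2 (h ▸ hcC)
        simp [hb, hic, hi.1, hi.2]
    rw [hsplit, h1, h2]
  -- sum over colors
  rw [← hx]
  have hdeg : G.degree x = N.card := rfl
  rw [hdeg]
  have hsplit : N.card = ∑ c ∈ C, (N.filter (fun u => f u = c)).card :=
    Finset.card_eq_sum_card_fiberwise (fun u hu => Finset.mem_image_of_mem f hu)
  rw [hsplit]
  calc ∑ c ∈ C, (N.filter (fun u => f u = c)).card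
      ≤ ∑ _c ∈ C, (2 ^ (p - 1) * 3 ^ (k - 1 - p)) := Finset.sum_le_sum hbound
    _ = p * (2 ^ (p - 1) * 3 ^ (k - 1 - p)) := by
        rw [Finset.sum_const, hp, smul_eq_mul]
    _ = p * 2 ^ (p - 1) * 3 ^ (k - 1 - p) := (mul_assoc _ _ _).symm
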